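/- arXiv:1803.02834 — 4 statements merged into one kernel-verified Lean document; each statement's English description precedes it below -/
import Mathlib

section
/- Let d ≥ 1 and ξ ≥ 0, and set A := ξ•(Φ_d − (1/d²)•I), a Hermitian matrix indexed by (Fin d × Fin d). Then the positive semidefinite square root of AᴴA satisfies √(AᴴA) = ξ•( ((d²−1)/d²)•Φ_d + (1/d²)•(I − Φ_d) ), where I is the identity matrix indexed by (Fin d × Fin d). -/
open Matrix
open scoped ComplexOrder

open Classical in
/-- Positive semidefinite square root of a matrix (zero if not PSD). -/
noncomputable def msqrt {n : Type*} [Fintype n] [DecidableEq n] (A : Matrix n n ℂ) :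
    Matrix n n ℂ :=
  if h : A.PosSemidef then
    h.1.eigenvectorUnitary.1 * diagonal ((↑) ∘ (√·) ∘ h.1.eigenvalues) *
      (star h.1.eigenvectorUnitary : Matrix n n ℂ) else 0

/-- The maximally entangled projector `Φ_d`. -/
noncomputable def maxEnt (d : ℕ) : Matrix (Fin d × Fin d) (Fin d × Fin d) ℂ :=
  Matrix.of fun p q => if p.1 = p.2 ∧ q.1 = q.2 then 1 / (d : ℂ) else 0

lemma real_smul_mat {n : Type*} (r : ℝ) (M : Matrix n n ℂ) :
    r • M = (r : ℂ) • M := by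
  ext i j
  simp [Complex.real_smul]

lemma maxEnt_conjTranspose (d : ℕ) : (maxEnt d)ᴴ = maxEnt d := by
  ext p q
  simp only [maxEnt, conjTranspose_apply, Matrix.of_apply]
  by_cases h : p.1 = p.2 ∧ q.1 = q.2
  · rw [if_pos ⟨h.2, h.1⟩, if_pos h]
    simp
  · rw [if_neg (by tauto), if_neg h, star_zero]

lemma maxEnt_mul_self (d : ℕ) (hd : 1 ≤ d) : maxEnt d * maxEnt d = maxEnt d := by
  have hd0 : (d : ℂ) ≠ 0 := by
    exact_mod_cast Nat.cast_ne_zero.mpr (by omega)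
  ext p q
  simp only [maxEnt, Matrix.mul_apply, Matrix.of_apply]
  rw [Fintype.sum_prod_type]
  by_cases hpq : p.1 = p.2 ∧ q.1 = q.2
  · rw [if_pos hpq]
    have key : ∀ i : Fin d, (∑ j : Fin d,
        (if p.1 = p.2 ∧ (i, j).1 = (i, j).2 then 1 / (d:ℂ) else 0) *
        (if (i, j).1 = (i, j).2 ∧ q.1 = q.2 then 1 / (d:ℂ) else 0)) = 1/(d:ℂ) * (1/(d:ℂ)) := by
      intro i
      rw [Finset.sum_eq_single i]
      · simp [hpq.1, hpq.2]
      · intro j _ hj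
        simp [Ne.symm hj]
      · simp
    calc _ = ∑ _i : Fin d, (1/(d:ℂ) * (1/(d:ℂ))) := Finset.sum_congr rfl fun i _ => key i
      _ = 1/(d:ℂ) := by
          rw [Finset.sum_const]
          simp only [Finset.card_univ, Fintype.card_fin, nsmul_eq_mul]
          field_simp
  · rw [if_neg hpq]
    apply Finset.sum_eq_zero
    intro i _
    apply Finset.sum_eq_zero
    intro j _
    rcases Decidable.not_and_iff_or_not.mp hpq with h | h
    · simp [h]
    · simp [h]

lemma smul_posSemidef {n : Type*} [Fintype n] {c : ℂ} (hc : 0 ≤ c)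
    {M : Matrix n n ℂ} (hM : M.PosSemidef) : (c • M).PosSemidef := by
  obtain ⟨hH, hQ⟩ := hM
  have hcr : star c = c := by
    rw [Complex.star_def, Complex.conj_eq_iff_im]
    exact ((Complex.le_def.mp hc).2).symm
  constructor
  · unfold Matrix.IsHermitian at *
    rw [conjTranspose_smul, hcr, hH]
  · exact (Matrix.PosSemidef.smul ⟨hH, hQ⟩ hc).2

set_option maxHeartbeats 1600000 in
theorem abs_of_isotropic_difference (d : ℕ) (hd : 1 ≤ d) (ξ : ℝ) (hξ : 0 ≤ ξ)
    (A : Matrix (Fin d × Fin d) (Fin d × Fin d) ℂ)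
    (hA : A = ξ • (maxEnt d - ((1 : ℝ) / (d : ℝ) ^ 2) • (1 : Matrix (Fin d × Fin d) (Fin d × Fin d) ℂ))) :
    msqrt (Aᴴ * A) =
      ξ • ((((d : ℝ) ^ 2 - 1) / (d : ℝ) ^ 2) • maxEnt d +
        ((1 : ℝ) / (d : ℝ) ^ 2) • ((1 : Matrix (Fin d × Fin d) (Fin d × Fin d) ℂ) - maxEnt d)) := by
  have hd0 : (d : ℝ) ≠ 0 := Nat.cast_ne_zero.mpr (by omega)
  have hd0C : (d : ℂ) ≠ 0 := Nat.cast_ne_zero.mpr (by omega)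
  set Φ := maxEnt d with hΦdef
  have hΦH : Φᴴ = Φ := maxEnt_conjTranspose d
  have hΦ2 : Φ * Φ = Φ := maxEnt_mul_self d hd
  have hΦpsd : Φ.PosSemidef := by
    have := Matrix.posSemidef_conjTranspose_mul_self Φ
    rwa [hΦH, hΦ2] at this
  have hIΦpsd : ((1 : Matrix (Fin d × Fin d) (Fin d × Fin d) ℂ) - Φ).PosSemidef := by
    have := Matrix.posSemidef_conjTranspose_mul_self
      ((1 : Matrix (Fin d × Fin d) (Fin d × Fin d) ℂ) - Φ)
    have he : ((1 : Matrix (Fin d × Fin d) (Fin d × Fin d) ℂ) - Φ)ᴴ *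
        ((1 : Matrix (Fin d × Fin d) (Fin d × Fin d) ℂ) - Φ) = 1 - Φ := by
      rw [conjTranspose_sub, conjTranspose_one, hΦH, Matrix.sub_mul, Matrix.mul_sub,
        Matrix.mul_sub, Matrix.one_mul, Matrix.mul_one, Matrix.one_mul, hΦ2]
      abel
    rwa [he] at this
  -- the candidate square root
  set B := ξ • ((((d : ℝ) ^ 2 - 1) / (d : ℝ) ^ 2) • Φ +
      ((1 : ℝ) / (d : ℝ) ^ 2) • ((1 : Matrix (Fin d × Fin d) (Fin d × Fin d) ℂ) - Φ)) with hBdef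
  have hBpsd : B.PosSemidef := by
    rw [hBdef, real_smul_mat, real_smul_mat, real_smul_mat, smul_add, smul_smul, smul_smul]
    apply Matrix.PosSemidef.add
    · apply smul_posSemidef _ hΦpsd
      apply mul_nonneg
      · exact_mod_cast hξ
      · have : (0:ℝ) ≤ ((d : ℝ) ^ 2 - 1) / (d : ℝ) ^ 2 := by
          apply div_nonneg _ (sq_nonneg _)
          have : (1:ℝ) ≤ (d:ℝ) := by exact_mod_cast hd
          nlinarith
        exact_mod_cast this
    · apply smul_posSemidef _ hIΦpsd
      apply mul_nonneg
      · exact_mod_cast hξ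
      · have : (0:ℝ) ≤ (1:ℝ) / (d : ℝ) ^ 2 := by positivity
        exact_mod_cast this
  have hAA : (Aᴴ * A).PosSemidef := Matrix.posSemidef_conjTranspose_mul_self A
  have hsq : B ^ 2 = Aᴴ * A := by
    rw [hBdef, hA, real_smul_mat, real_smul_mat, real_smul_mat, real_smul_mat,
      real_smul_mat]
    push_cast
    rw [conjTranspose_smul, conjTranspose_sub, conjTranspose_smul, conjTranspose_one, hΦH]
    have hξc : star (ξ : ℂ) = (ξ : ℂ) := by simp [Complex.star_def]
    have hcc : star ((1:ℂ) / (d:ℂ)^2) = (1:ℂ)/(d:ℂ)^2 := by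
      simp [Complex.star_def]
    rw [hξc, hcc, pow_two]
    simp only [smul_mul_smul_comm, Matrix.mul_add, Matrix.add_mul, Matrix.mul_sub,
      Matrix.sub_mul, Matrix.smul_mul, Matrix.mul_smul, Matrix.mul_one, Matrix.one_mul,
      hΦ2, smul_sub, smul_add, smul_smul]
    ext p q
    simp only [Matrix.add_apply, Matrix.sub_apply, Matrix.smul_apply, Matrix.one_apply,
      smul_eq_mul]
    have h1 : ((d:ℂ)^2) ≠ 0 := pow_ne_zero _ hd0C
    split_ifs <;> field_simp <;> ring
  show msqrt (Aᴴ * A) = B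
  unfold msqrt
  rw [dif_pos hAA]
  change hAA.1.cfc Real.sqrt = B
  open scoped MatrixOrder in
  have h0 : (0 : Matrix (Fin d × Fin d) (Fin d × Fin d) ℂ) ≤ Aᴴ * A :=
    Matrix.nonneg_iff_posSemidef.mpr hAA
  open scoped MatrixOrder in
  rw [← hAA.1.cfc_eq, ← cfcₙ_eq_cfc, ← CFC.sqrt_eq_real_sqrt _ h0]
  open scoped MatrixOrder in
  exact CFC.sqrt_unique (by rw [← pow_two]; exact hsq) (Matrix.nonneg_iff_posSemidef.mpr hBpsd)
end

section
/- Let d ≥ 1 and let p be a real number with 0 ≤ p ≤ 1. Then ‖Φ_d − ((1−p)•Φ_d + (p/d²)•I)‖₁ = 2p(d²−1)/d², where I is the identity matrix indexed by (Fin d × Fin d). In other words, the trace distance between the Choi matrix of the identity channel and the isotropic Choi matrix of a depolarizing channel with depolarizing probability p equals 2p(d²−1)/d². -/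
open Matrix
open scoped ComplexOrder

/-- Trace norm of a complex square matrix: `Tr √(Aᴴ A)`. -/
noncomputable def traceNorm {n : Type*} [Fintype n] [DecidableEq n] (A : Matrix n n ℂ) : ℝ :=
  ((msqrt (Aᴴ * A)).trace).re

open scoped MatrixOrder in
lemma msqrt_eq_of_mul_self {n : Type*} [Fintype n] [DecidableEq n] {A B : Matrix n n ℂ}
    (hA : A.PosSemidef) (hB : B.PosSemidef) (h : B * B = A) : msqrt A = B := by
  have h1 : CFC.sqrt A = B := CFC.sqrt_unique h hB.nonneg
  rw [CFC.sqrt_eq_cfc, cfc_nnreal_eq_real _ A hA.nonneg, hA.1.cfc_eq] at h1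
  rw [← h1, msqrt, dif_pos hA]
  simp only [IsHermitian.cfc, Unitary.conjStarAlgAut_apply]
  congr 3
  funext i
  simp [hA.eigenvalues_nonneg i]

theorem trace_dist_maxEnt_isotropic (d : ℕ) (hd : 1 ≤ d) (p : ℝ) (hp0 : 0 ≤ p) (hp1 : p ≤ 1) :
    traceNorm (maxEnt d -
        ((1 - p) • maxEnt d +
          (p / (d : ℝ) ^ 2) • (1 : Matrix (Fin d × Fin d) (Fin d × Fin d) ℂ))) =
      2 * p * ((d : ℝ) ^ 2 - 1) / (d : ℝ) ^ 2 := by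
  have hd0 : (d : ℂ) ≠ 0 := Nat.cast_ne_zero.mpr (by omega)
  have hdr0 : (d : ℝ) ≠ 0 := Nat.cast_ne_zero.mpr (by omega)
  have hdr1 : (1 : ℝ) ≤ (d : ℝ) := by exact_mod_cast hd
  set Φ := maxEnt d with hΦ
  -- basic facts about Φ
  have hΦH : Φᴴ = Φ := by
    ext ⟨i, k⟩ ⟨j, l⟩
    simp only [hΦ, maxEnt, conjTranspose_apply, of_apply]
    by_cases h : i = k ∧ j = l <;> simp [h, and_comm (a := j = l)] <;> tauto
  have hΦΦ : Φ * Φ = Φ := by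
    ext ⟨i, k⟩ ⟨j, l⟩
    simp only [hΦ, maxEnt, mul_apply, of_apply, Fintype.sum_prod_type]
    by_cases h1 : i = k <;> by_cases h2 : j = l <;>
      simp [h1, h2, ite_and, mul_ite, ite_mul, Finset.sum_ite_eq, Finset.sum_ite_eq'] <;>
      field_simp
  have htrΦ : Φ.trace = 1 := by
    simp only [hΦ, maxEnt, trace, diag, of_apply, Fintype.sum_prod_type]
    simp [Finset.sum_ite_eq, hd0]
  have htr1 : (1 : Matrix (Fin d × Fin d) (Fin d × Fin d) ℂ).trace = ((d : ℂ) ^ 2) := by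
    simp [trace_one, sq]
  -- generic product of matrices of the form α•Φ + β•1
  have hprod : ∀ α β γ δ : ℂ, (α • Φ + β • 1) * (γ • Φ + δ • 1)
      = (α * γ + α * δ + β * γ) • Φ + (β * δ) • 1 := by
    intro α β γ δ
    simp only [add_mul, mul_add, smul_mul_assoc, mul_smul_comm, hΦΦ, mul_one, one_mul,
      smul_smul]
    module
  -- the matrix A in ℂ-scalar form
  set b : ℝ := p / (d : ℝ) ^ 2 with hb
  set a : ℝ := p - b with ha
  have hb0 : 0 ≤ b := by positivity
  have ha0 : 0 ≤ a := by
    rw [ha, hb, sub_nonneg, div_le_iff₀ (by positivity)]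
    nlinarith [sq_nonneg ((d : ℝ) - 1)]
  have hA : Φ - ((1 - p) • Φ + (p / (d : ℝ) ^ 2) • 1)
      = (p : ℂ) • Φ + (-(b : ℂ)) • (1 : Matrix (Fin d × Fin d) (Fin d × Fin d) ℂ) := by
    ext i j
    by_cases h : i = j <;>
      simp [hΦ, Matrix.sub_apply, Matrix.add_apply, Matrix.smul_apply, Matrix.one_apply, hb, h,
        Complex.real_smul, smul_eq_mul] <;> push_cast <;> ring
  set A : Matrix (Fin d × Fin d) (Fin d × Fin d) ℂ :=
    (p : ℂ) • Φ + (-(b : ℂ)) • 1 with hAdef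
  -- Hermitian coefficients
  have hAH : Aᴴ = A := by
    simp [hAdef, conjTranspose_add, conjTranspose_smul, hΦH, conjTranspose_one,
      Complex.star_def, Complex.conj_ofReal]
  -- C : square root of B
  set sa : ℝ := Real.sqrt a with hsa
  set sb : ℝ := Real.sqrt b with hsb
  set C : Matrix (Fin d × Fin d) (Fin d × Fin d) ℂ :=
    ((sa - sb : ℝ) : ℂ) • Φ + ((sb : ℝ) : ℂ) • 1 with hCdef
  have hCH : Cᴴ = C := by
    simp [hCdef, conjTranspose_add, conjTranspose_smul, hΦH, conjTranspose_one,
      Complex.star_def, Complex.conj_ofReal]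
  set B : Matrix (Fin d × Fin d) (Fin d × Fin d) ℂ :=
    ((a - b : ℝ) : ℂ) • Φ + ((b : ℝ) : ℂ) • 1 with hBdef
  have hCC : C * C = B := by
    rw [hCdef, hprod, hBdef]
    have h1 : ((sa : ℂ) - sb) * ((sa : ℂ) - sb) + ((sa : ℂ) - sb) * sb + (sb : ℂ) * ((sa:ℂ) - sb)
        = ((a : ℂ) - b) := by
      have e1 : (sa : ℂ) * sa = (a : ℂ) := by
        rw [← Complex.ofReal_mul, hsa, Real.mul_self_sqrt ha0]
      have e2 : (sb : ℂ) * sb = (b : ℂ) := by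
        rw [← Complex.ofReal_mul, hsb, Real.mul_self_sqrt hb0]
      linear_combination e1 - e2
    have h2 : ((sb : ℝ) : ℂ) * ((sb : ℝ) : ℂ) = ((b : ℝ) : ℂ) := by
      rw [← Complex.ofReal_mul, hsb, Real.mul_self_sqrt hb0]
    push_cast
    rw [h1, h2]
  have hac : ((a : ℝ) : ℂ) = ((p : ℝ) : ℂ) - ((b : ℝ) : ℂ) := by
    rw [ha]; push_cast; ring
  have hB2 : B * B = Aᴴ * A := by
    rw [hAH, hAdef, hBdef, hprod, hprod]
    congr 1
    · congr 1
      push_cast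
      linear_combination (((a:ℝ):ℂ) + ((p:ℝ):ℂ) - ((b:ℝ):ℂ)) * hac
    · congr 1
      ring
  have hBpsd : B.PosSemidef := by
    have h := Matrix.posSemidef_conjTranspose_mul_self C
    rwa [hCH, hCC] at h
  have hAApsd : (Aᴴ * A).PosSemidef := Matrix.posSemidef_conjTranspose_mul_self A
  have hsqrt : msqrt (Aᴴ * A) = B := msqrt_eq_of_mul_self hAApsd hBpsd hB2
  rw [traceNorm, hA, hsqrt, hBdef]
  rw [trace_add, trace_smul, trace_smul, htrΦ, htr1]
  simp only [smul_eq_mul, mul_one]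
  have hre : (((a - b : ℝ) : ℂ) + ((b : ℝ) : ℂ) * ((d : ℂ) ^ 2))
      = (((a - b) + b * (d : ℝ) ^ 2 : ℝ) : ℂ) := by push_cast; ring
  rw [hre, Complex.ofReal_re, ha, hb]
  field_simp
  ring
end

section
/- Let p₀, p₁ be real numbers with 0 ≤ p₀ ≤ 1 and 0 ≤ p₁ ≤ 1, and let ρ_{p₀} and ρ_{p₁} be the Choi matrices of the corresponding amplitude damping channels. Then both matrices are positive semidefinite, and their fidelity equals F(ρ_{p₀}, ρ_{p₁}) = (1 + √((1−p₀)(1−p₁)) + √(p₀·p₁)) / 2. -/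
open Matrix
open scoped ComplexOrder

/-- Fidelity `F(ρ,σ) = Tr √(√ρ σ √ρ)` of two (positive semidefinite) matrices. -/
noncomputable def mFidelity {n : Type*} [Fintype n] [DecidableEq n]
    (ρ σ : Matrix n n ℂ) : ℝ :=
  ((msqrt (msqrt ρ * σ * msqrt ρ)).trace).re

/-- Choi matrix of the amplitude damping channel with damping probability `p`
(rows/columns ordered 00,01,10,11). -/
noncomputable def rhoAD (p : ℝ) : Matrix (Fin 4) (Fin 4) ℂ :=
  !![1 / 2, 0, 0, (Real.sqrt (1 - p) : ℂ) / 2;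
     0, 0, 0, 0;
     0, 0, (p : ℂ) / 2, 0;
     (Real.sqrt (1 - p) : ℂ) / 2, 0, 0, ((1 - p : ℝ) : ℂ) / 2]

/-- `Fm s l m = l |v⟩⟨v| + m |e₂⟩⟨e₂|` with `v = (1,0,0,s)`. -/
noncomputable def Fm (s l m : ℝ) : Matrix (Fin 4) (Fin 4) ℂ :=
  !![(l : ℂ), 0, 0, (l : ℂ) * s;
     0, 0, 0, 0;
     0, 0, (m : ℂ), 0;
     (l : ℂ) * s, 0, 0, (l : ℂ) * s * s]

/-- Factor of `Fm` witnessing positive semidefiniteness. -/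
noncomputable def Wm (s l m : ℝ) : Matrix (Fin 4) (Fin 4) ℂ :=
  !![(Real.sqrt l : ℂ), 0, 0, (Real.sqrt l : ℂ) * s;
     0, 0, 0, 0;
     0, 0, (Real.sqrt m : ℂ), 0;
     0, 0, 0, 0]

lemma Fm_eq_conjTranspose_mul_self (s l m : ℝ) (hl : 0 ≤ l) (hm : 0 ≤ m) :
    Fm s l m = (Wm s l m)ᴴ * Wm s l m := by
  have hl2 : (Real.sqrt l : ℂ) * Real.sqrt l = (l : ℂ) := by
    rw [← Complex.ofReal_mul, Real.mul_self_sqrt hl]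
  have hm2 : (Real.sqrt m : ℂ) * Real.sqrt m = (m : ℂ) := by
    rw [← Complex.ofReal_mul, Real.mul_self_sqrt hm]
  ext i j
  fin_cases i <;> fin_cases j <;>
    simp [Fm, Wm, Matrix.mul_apply, Fin.sum_univ_four, Matrix.vecHead, Matrix.vecTail,
      ← hl2, ← hm2] <;> ring

lemma Fm_posSemidef (s l m : ℝ) (hl : 0 ≤ l) (hm : 0 ≤ m) : (Fm s l m).PosSemidef := by
  rw [Fm_eq_conjTranspose_mul_self s l m hl hm]
  exact posSemidef_conjTranspose_mul_self _

set_option maxHeartbeats 1000000 in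
lemma Fm_mul_Fm (s l m l' m' : ℝ) :
    Fm s l m * Fm s l' m' = Fm s (l * l' * (1 + s^2)) (m * m') := by
  ext i j
  fin_cases i <;> fin_cases j <;>
    simp [Fm, Matrix.mul_apply, Fin.sum_univ_four, Matrix.vecHead, Matrix.vecTail] <;>
    push_cast <;> ring

set_option maxHeartbeats 2000000 in
lemma Fm_sandwich (s s' l m l' m' : ℝ) :
    Fm s l m * Fm s' l' m' * Fm s l m
      = Fm s (l^2 * l' * (1 + s*s')^2) (m^2 * m') := by
  ext i j
  fin_cases i <;> fin_cases j <;>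
    simp [Fm, Matrix.mul_apply, Fin.sum_univ_four, Matrix.vecHead, Matrix.vecTail] <;>
    push_cast <;> ring

lemma Fm_trace_re (s l m : ℝ) : ((Fm s l m).trace).re = l * (1 + s^2) + m := by
  simp [Fm, Matrix.trace, Fin.sum_univ_four, Matrix.diag, Matrix.vecHead, Matrix.vecTail,
    ← Complex.ofReal_mul]
  push_cast
  ring

open scoped MatrixOrder in
lemma msqrt_eq {n : Type*} [Fintype n] [DecidableEq n] {A S : Matrix n n ℂ}
    (hA : A.PosSemidef) (hS : S.PosSemidef) (h : S * S = A) : msqrt A = S := by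
  rw [msqrt, dif_pos hA]
  have hsq : CFC.sqrt A = S := CFC.sqrt_unique h hS.nonneg
  rw [← hsq, CFC.sqrt_eq_cfc, cfc_nnreal_eq_real _ A, hA.1.cfc_eq]
  simp only [IsHermitian.cfc, Unitary.conjStarAlgAut_apply]
  congr 3
  funext i
  simp [Real.coe_sqrt, Real.coe_toNNReal', max_eq_left (hA.eigenvalues_nonneg i)]

lemma rhoAD_eq_Fm (p : ℝ) (hp0 : 0 ≤ p) (hp1 : p ≤ 1) :
    rhoAD p = Fm (Real.sqrt (1 - p)) (1/2) (p/2) := by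
  ext i j
  fin_cases i <;> fin_cases j <;>
    simp [rhoAD, Fm, Matrix.vecHead, Matrix.vecTail] <;>
    first
    | ring1
    | (ring_nf;
       rw [← Complex.ofReal_pow, Real.sq_sqrt (by linarith : (0:ℝ) ≤ 1 - p)];
       push_cast; ring1)

theorem fidelity_amplitude_damping_choi (p₀ p₁ : ℝ)
    (h₀0 : 0 ≤ p₀) (h₀1 : p₀ ≤ 1) (h₁0 : 0 ≤ p₁) (h₁1 : p₁ ≤ 1) :
    (rhoAD p₀).PosSemidef ∧ (rhoAD p₁).PosSemidef ∧
      mFidelity (rhoAD p₀) (rhoAD p₁) =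
        (1 + Real.sqrt ((1 - p₀) * (1 - p₁)) + Real.sqrt (p₀ * p₁)) / 2 := by
  set s₀ := Real.sqrt (1 - p₀) with hs₀def
  set s₁ := Real.sqrt (1 - p₁) with hs₁def
  have hq₀ : (0:ℝ) < 2 - p₀ := by linarith
  have hs₀sq : s₀ ^ 2 = 1 - p₀ := Real.sq_sqrt (by linarith)
  have hs₀0 : 0 ≤ s₀ := Real.sqrt_nonneg _
  have hs₁0 : 0 ≤ s₁ := Real.sqrt_nonneg _
  have hρ₀eq := rhoAD_eq_Fm p₀ h₀0 h₀1
  have hρ₁eq := rhoAD_eq_Fm p₁ h₁0 h₁1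
  have hρ₀ : (rhoAD p₀).PosSemidef := by
    rw [hρ₀eq]; exact Fm_posSemidef _ _ _ (by norm_num) (by linarith)
  have hρ₁ : (rhoAD p₁).PosSemidef := by
    rw [hρ₁eq]; exact Fm_posSemidef _ _ _ (by norm_num) (by linarith)
  refine ⟨hρ₀, hρ₁, ?_⟩
  set α := Real.sqrt (1 / (2 * (2 - p₀))) with hαdef
  set β := Real.sqrt (p₀ / 2) with hβdef
  have hα2 : α * α = 1 / (2 * (2 - p₀)) := Real.mul_self_sqrt (by positivity)
  have hβ2 : β * β = p₀ / 2 := Real.mul_self_sqrt (by positivity)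
  have hS₀ : msqrt (rhoAD p₀) = Fm s₀ α β := by
    refine msqrt_eq hρ₀ (Fm_posSemidef _ _ _ (Real.sqrt_nonneg _) (Real.sqrt_nonneg _)) ?_
    rw [Fm_mul_Fm, hρ₀eq]
    have h1 : α * α * (1 + s₀ ^ 2) = 1 / 2 := by
      rw [hα2, hs₀sq]; field_simp; ring
    rw [h1, hβ2]
  rw [mFidelity, hS₀, hρ₁eq, Fm_sandwich]
  set c := 1 + s₀ * s₁ with hcdef
  have hc0 : 0 ≤ c := by positivity
  set G := c / (2 * (2 - p₀)) with hGdef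
  set H := Real.sqrt (p₀ * p₁) / 2 with hHdef
  have hT : msqrt (Fm s₀ (α ^ 2 * (1 / 2) * (1 + s₀ * s₁) ^ 2) (β ^ 2 * (p₁ / 2)))
      = Fm s₀ G H := by
    refine msqrt_eq (Fm_posSemidef _ _ _ (by positivity) (by positivity))
      (Fm_posSemidef _ _ _ (by positivity) (by positivity)) ?_
    rw [Fm_mul_Fm]
    have hα2' : α ^ 2 = 1 / (2 * (2 - p₀)) := by rw [pow_two]; exact hα2
    have h1 : G * G * (1 + s₀ ^ 2) = α ^ 2 * (1 / 2) * (1 + s₀ * s₁) ^ 2 := by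
      rw [hα2', hGdef, hs₀sq, hcdef]
      field_simp
      ring
    have hβ2' : β ^ 2 = p₀ / 2 := by rw [pow_two]; exact hβ2
    have h2 : H * H = β ^ 2 * (p₁ / 2) := by
      rw [hHdef, hβ2']
      rw [div_mul_div_comm, Real.mul_self_sqrt (by positivity)]
      ring
    rw [h1, h2]
  rw [hT, Fm_trace_re]
  have hss : s₀ * s₁ = Real.sqrt ((1 - p₀) * (1 - p₁)) := by
    rw [hs₀def, hs₁def, ← Real.sqrt_mul (by linarith)]
  have h2p : (1:ℝ) + s₀ ^ 2 = 2 - p₀ := by rw [hs₀sq]; ring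
  rw [hGdef, hHdef, h2p, hcdef, hss]
  field_simp
end

section
/- Let p, ξ be real numbers with 0 ≤ p ≤ 1 and 0 ≤ ξ ≤ 1. Then ‖ρ_sim(p,ξ) − ρ_p‖₁ = ξ·( (1−p)/2 + √(1−p) ). That is, the trace distance between the Choi matrix of the amplitude damping channel with damping probability p and the Choi matrix of its M-port PBT simulation with depolarizing probability ξ equals ξ((1−p)/2 + √(1−p)). -/
set_option maxHeartbeats 1000000

open Matrix
open scoped ComplexOrder

/-- Choi matrix of the M-port PBT simulation of the amplitude damping channel
(rows/columns ordered 00,01,10,11). -/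
noncomputable def rhoSim (p ξ : ℝ) : Matrix (Fin 4) (Fin 4) ℂ :=
  !![((1 / 2 - (1 - p) * ξ / 4 : ℝ) : ℂ), 0, 0,
       ((Real.sqrt (1 - p) * (1 / 2 - ξ / 2) : ℝ) : ℂ);
     0, (((1 - p) * ξ / 4 : ℝ) : ℂ), 0, 0;
     0, 0, (((1 / 2 - ξ / 4) * p + ξ / 4 : ℝ) : ℂ), 0;
     ((Real.sqrt (1 - p) * (1 / 2 - ξ / 2) : ℝ) : ℂ), 0, 0,
       (((1 / 2 - ξ / 4) * (1 - p) : ℝ) : ℂ)]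

theorem trace_dist_amplitude_damping_sim (p ξ : ℝ)
    (hp0 : 0 ≤ p) (hp1 : p ≤ 1) (hξ0 : 0 ≤ ξ) (hξ1 : ξ ≤ 1) :
    traceNorm (rhoSim p ξ - rhoAD p) = ξ * ((1 - p) / 2 + Real.sqrt (1 - p)) := by
  set s := Real.sqrt (1 - p) with hs
  have hq : (0:ℝ) ≤ 1 - p := by linarith
  have hs0 : 0 ≤ s := Real.sqrt_nonneg _
  have hs2 : s ^ 2 = 1 - p := Real.sq_sqrt hq
  have hs1 : s ≤ 1 := by
    rw [hs]; exact Real.sqrt_le_one.2 (by linarith)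
  have hpc : (p : ℂ) = 1 - (s : ℂ) ^ 2 := by
    have : p = 1 - s ^ 2 := by linarith
    rw [this]; push_cast; ring
  set a := Real.sqrt (ξ * (2 * s + s ^ 2) / 8) with ha
  set b := Real.sqrt (ξ * (2 * s - s ^ 2) / 8) with hb
  set c := Real.sqrt (ξ * s ^ 2 / 4) with hc
  have ha2 : a ^ 2 = ξ * (2 * s + s ^ 2) / 8 :=
    Real.sq_sqrt (by positivity)
  have hb2 : b ^ 2 = ξ * (2 * s - s ^ 2) / 8 :=
    Real.sq_sqrt (by
      have : 0 ≤ s * (2 - s) := by nlinarith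
      have h2 : 0 ≤ 2 * s - s ^ 2 := by nlinarith
      positivity)
  have hc2 : c ^ 2 = ξ * s ^ 2 / 4 := Real.sq_sqrt (by positivity)
  set S : Matrix (Fin 4) (Fin 4) ℂ :=
    !![((ξ * s / 2 : ℝ) : ℂ), 0, 0, ((ξ * s ^ 2 / 4 : ℝ) : ℂ);
       0, ((ξ * s ^ 2 / 4 : ℝ) : ℂ), 0, 0;
       0, 0, ((ξ * s ^ 2 / 4 : ℝ) : ℂ), 0;
       ((ξ * s ^ 2 / 4 : ℝ) : ℂ), 0, 0, ((ξ * s / 2 : ℝ) : ℂ)] with hSdef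
  set B : Matrix (Fin 4) (Fin 4) ℂ :=
    !![(a : ℂ), 0, 0, (a : ℂ);
       (b : ℂ), 0, 0, (-b : ℂ);
       0, (c : ℂ), 0, 0;
       0, 0, (c : ℂ), 0] with hBdef
  have hSB : S = Bᴴ * B := by
    ext i j
    fin_cases i <;> fin_cases j <;>
      simp [hSdef, hBdef, Matrix.mul_apply, Fin.sum_univ_four, Matrix.conjTranspose_apply,
        Complex.conj_ofReal, Matrix.vecHead, Matrix.vecTail] <;>
      norm_cast <;> rw [← Complex.ofReal_ofNat, ← Complex.ofReal_div, Complex.ofReal_inj] <;>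
      first
        | linear_combination -ha2 - hb2
        | linear_combination -ha2 + hb2
        | linear_combination -hc2
  have hS_psd : S.PosSemidef := hSB ▸ Matrix.posSemidef_conjTranspose_mul_self B
  have hD : ((rhoSim p ξ - rhoAD p)ᴴ * (rhoSim p ξ - rhoAD p)).PosSemidef :=
    Matrix.posSemidef_conjTranspose_mul_self _
  have hsq : S ^ 2 = (rhoSim p ξ - rhoAD p)ᴴ * (rhoSim p ξ - rhoAD p) := by
    ext i j
    fin_cases i <;> fin_cases j <;>
      simp [hSdef, pow_two, rhoSim, rhoAD, Matrix.mul_apply, Matrix.sub_apply,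
        Matrix.conjTranspose_apply, Fin.sum_univ_four, Complex.conj_ofReal,
        Matrix.vecHead, Matrix.vecTail, map_ofNat, map_inv₀, map_div₀, _root_.map_one, ← hs] <;>
      push_cast [hpc] <;> ring
  open scoped MatrixOrder in
  have hSeq : CFC.sqrt ((rhoSim p ξ - rhoAD p)ᴴ * (rhoSim p ξ - rhoAD p)) = S :=
    CFC.sqrt_unique ((sq S).symm.trans hsq) hS_psd.nonneg
  have hms : msqrt ((rhoSim p ξ - rhoAD p)ᴴ * (rhoSim p ξ - rhoAD p)) = S := by
    open scoped MatrixOrder in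
    rw [msqrt, dif_pos hD, ← hSeq, CFC.sqrt_eq_cfc, cfc_nnreal_eq_real _ _ hD.nonneg, hD.1.cfc_eq]
    simp [IsHermitian.cfc, Function.comp_def]
    congr 3
    funext i
    congr 2
    refine (max_eq_left ?_).symm
    convert hD.eigenvalues_nonneg i
    · rfl
    · exact (conjTranspose_sub _ _).symm
  rw [traceNorm, hms]
  simp [hSdef, Matrix.trace, Matrix.diag, Fin.sum_univ_four, Matrix.vecHead, Matrix.vecTail]
  simp only [← Complex.ofReal_pow, Complex.ofReal_re]
  push_cast
  linear_combination (ξ / 2) * hs2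
end
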